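/- Let ε = inf_{W ∈ ℝ^m} ℓ_λ(W). If ε < λ^{1 + 1/H} / (2 (H(H+1) r)^{2/H}), then there exists θ with λ > θ > 0 such that every global minimizer of ℓ_λ lies in U(λ,θ). -/
import Mathlib


open scoped BigOperators

/-- Index set for all weights of the network: a weight `w^i_{j,k}` connects
neuron `j` in layer `i` to neuron `k` in layer `i+1`. -/
abbrev WeightIdx (n : ℕ → ℕ) (H : ℕ) : Type :=
  (i : Fin (H + 1)) × (Fin (n i) × Fin (n (i + 1)))

/-- Weight space `ℝ^m`, with the Euclidean norm. -/
abbrev WeightSpace (n : ℕ → ℕ) (H : ℕ) : Type :=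
  EuclideanSpace ℝ (WeightIdx n H)

/-- Activations of the feed-forward ReLU network:
`x_0 = a`, `x_{k+1} = σ(W_k^T x_k)`. -/
def netAct (n : ℕ → ℕ) (H : ℕ) (W : WeightSpace n H)
    (a : EuclideanSpace ℝ (Fin (n 0))) : (k : ℕ) → k ≤ H + 1 → (Fin (n k) → ℝ)
  | 0, _ => a
  | k + 1, h => fun j =>
      max (∑ l : Fin (n k), W ⟨⟨k, h⟩, (l, j)⟩ * netAct n H W a k (Nat.le_of_succ_le h) l) 0

/-- Scalar output of the ReLU network, `y(a, W)`. -/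
def netOut (n : ℕ → ℕ) (H : ℕ) (hout : n (H + 1) = 1) (W : WeightSpace n H)
    (a : EuclideanSpace ℝ (Fin (n 0))) : ℝ :=
  netAct n H W a (H + 1) le_rfl ⟨0, by omega⟩

/-- Quadratic training loss `ℓ(W)`. -/
noncomputable def loss (n : ℕ → ℕ) (H N : ℕ) (hout : n (H + 1) = 1)
    (a : Fin N → EuclideanSpace ℝ (Fin (n 0)))
    (f : EuclideanSpace ℝ (Fin (n 0)) → ℝ) (W : WeightSpace n H) : ℝ :=
  (1 / (2 * (N : ℝ))) * ∑ i, (f (a i) - netOut n H hout W (a i)) ^ 2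

/-- Regularized loss `ℓ_λ(W) = ℓ(W) + (λ/2)‖W‖²`. -/
noncomputable def lossReg (n : ℕ → ℕ) (H N : ℕ) (hout : n (H + 1) = 1)
    (a : Fin N → EuclideanSpace ℝ (Fin (n 0)))
    (f : EuclideanSpace ℝ (Fin (n 0)) → ℝ) (lam : ℝ) (W : WeightSpace n H) : ℝ :=
  loss n H N hout a f W + lam / 2 * ‖W‖ ^ 2

/-- The `i`-th weight matrix `W_i` of a weight vector `W`. -/
def block (n : ℕ → ℕ) (H : ℕ) (W : WeightSpace n H) (i : Fin (H + 1)) :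
    Matrix (Fin (n i)) (Fin (n (i + 1))) ℝ :=
  Matrix.of fun j k => W ⟨i, (j, k)⟩

/-- Operator norm (induced by the Euclidean norms) of a matrix. -/
noncomputable def opNorm2 {p q : ℕ} (M : Matrix (Fin p) (Fin q) ℝ) : ℝ :=
  ‖LinearMap.toContinuousLinearMap (Matrix.toEuclideanLin M)‖

/-- `‖W‖_* = max_i ‖W_i‖₂`. -/
noncomputable def starNorm (n : ℕ → ℕ) (H : ℕ) (W : WeightSpace n H) : ℝ :=
  ⨆ i : Fin (H + 1), opNorm2 (block n H W i)

/-- The set `U(λ,θ)`. -/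
noncomputable def Uset (n : ℕ → ℕ) (H N : ℕ) (hout : n (H + 1) = 1)
    (a : Fin N → EuclideanSpace ℝ (Fin (n 0)))
    (f : EuclideanSpace ℝ (Fin (n 0)) → ℝ) (lam θ r : ℝ) : Set (WeightSpace n H) :=
  {W | Real.sqrt (loss n H N hout a f W) * starNorm n H W ^ (H - 1) <
    (lam - θ) / (Real.sqrt 2 * ((H : ℝ) * ((H : ℝ) + 1)) * r)}

lemma opNorm2_block_le (n : ℕ → ℕ) (H : ℕ) (W : WeightSpace n H) (i : Fin (H + 1)) :
    opNorm2 (block n H W i) ≤ ‖W‖ := by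
  rw [opNorm2]
  apply ContinuousLinearMap.opNorm_le_bound _ (norm_nonneg W)
  intro x
  simp only [LinearMap.coe_toContinuousLinearMap']
  have key : ∑ j, ((Matrix.toEuclideanLin (block n H W i)) x j) ^ 2
      ≤ (‖W‖ * ‖x‖) ^ 2 := by
    have happ : ∀ j, (Matrix.toEuclideanLin (block n H W i)) x j
        = ∑ k, W ⟨i, (j, k)⟩ * x k := by
      intro j
      rfl
    calc ∑ j, ((Matrix.toEuclideanLin (block n H W i)) x j) ^ 2
        = ∑ j, (∑ k, W ⟨i, (j, k)⟩ * x k) ^ 2 := by simp_rw [happ]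
      _ ≤ ∑ j, (∑ k, W ⟨i, (j, k)⟩ ^ 2) * (∑ k, x k ^ 2) := by
          apply Finset.sum_le_sum
          intro j _
          exact Finset.sum_mul_sq_le_sq_mul_sq _ _ _
      _ = (∑ j, ∑ k, W ⟨i, (j, k)⟩ ^ 2) * (∑ k, x k ^ 2) := by
          rw [Finset.sum_mul]
      _ ≤ ‖W‖ ^ 2 * ‖x‖ ^ 2 := by
          apply mul_le_mul
          · rw [EuclideanSpace.norm_eq, Real.sq_sqrt (by positivity)]
            have hsig : ∑ idx : WeightIdx n H, ‖W idx‖ ^ 2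
                = ∑ i' : Fin (H + 1), ∑ p : Fin (n i') × Fin (n (i' + 1)),
                    ‖W ⟨i', p⟩‖ ^ 2 := by
              rw [← Finset.univ_sigma_univ, Finset.sum_sigma]
            rw [hsig]
            have h1 : ∑ j, ∑ k, W ⟨i, (j, k)⟩ ^ 2
                = ∑ p : Fin (n i) × Fin (n (i + 1)), ‖W ⟨i, p⟩‖ ^ 2 := by
              rw [Fintype.sum_prod_type]
              simp [sq_abs]
            rw [h1]
            apply Finset.single_le_sum (f := fun i' : Fin (H + 1) =>
              ∑ p : Fin (n i') × Fin (n (i' + 1)), ‖W ⟨i', p⟩‖ ^ 2)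
              (fun _ _ => by positivity) (Finset.mem_univ i)
          · rw [EuclideanSpace.norm_eq, Real.sq_sqrt (by positivity)]
            apply le_of_eq
            simp [sq_abs]
          · positivity
          · positivity
      _ = (‖W‖ * ‖x‖) ^ 2 := by ring
  have hn : ‖(Matrix.toEuclideanLin (block n H W i)) x‖
      = Real.sqrt (∑ j, ((Matrix.toEuclideanLin (block n H W i)) x j) ^ 2) := by
    rw [EuclideanSpace.norm_eq]
    simp [sq_abs]
  rw [hn]
  calc Real.sqrt (∑ j, ((Matrix.toEuclideanLin (block n H W i)) x j) ^ 2)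
      ≤ Real.sqrt ((‖W‖ * ‖x‖) ^ 2) := Real.sqrt_le_sqrt key
    _ = ‖W‖ * ‖x‖ := Real.sqrt_sq (by positivity)

/-- if `ε = inf ℓ_λ < λ^{1+1/H} / (2(H(H+1)r)^{2/H})`, then there is
`λ > θ > 0` such that every global minimizer of `ℓ_λ` lies in `U(λ,θ)`. -/
theorem global_minimizers_in_Uset (n : ℕ → ℕ) (H : ℕ) (hH : 1 ≤ H)
    (hout : n (H + 1) = 1) (hwidth : ∀ i, 1 ≤ i → i ≤ H → 1 < n i)
    (N : ℕ) (a : Fin N → EuclideanSpace ℝ (Fin (n 0)))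
    (f : EuclideanSpace ℝ (Fin (n 0)) → ℝ)
    (r lam : ℝ) (hr : 0 < r) (hlam : 0 < lam) (hnorm : ∀ i, ‖a i‖ ≤ r)
    (heps : (⨅ W : WeightSpace n H, lossReg n H N hout a f lam W) <
      lam ^ ((1 : ℝ) + 1 / (H : ℝ)) /
        (2 * ((H : ℝ) * ((H : ℝ) + 1) * r) ^ ((2 : ℝ) / (H : ℝ)))) :
    ∃ θ : ℝ, 0 < θ ∧ θ < lam ∧
      ∀ W : WeightSpace n H,
        (∀ V : WeightSpace n H, lossReg n H N hout a f lam W ≤ lossReg n H N hout a f lam V) →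
        W ∈ Uset n H N hout a f lam θ r := by
  obtain ⟨K, rfl⟩ : ∃ K, H = K + 1 := ⟨H - 1, by omega⟩
  set H := K + 1 with hHdef
  set ε := ⨅ W : WeightSpace n H, lossReg n H N hout a f lam W with hεdef
  set C := (H : ℝ) * ((H : ℝ) + 1) * r with hCdef
  have hHpos : (0 : ℝ) < (H : ℝ) := by positivity
  have hC : 0 < C := by positivity
  have hloss_nonneg : ∀ V : WeightSpace n H, 0 ≤ loss n H N hout a f V := by
    intro V
    unfold loss
    positivity
  have hreg_nonneg : ∀ V : WeightSpace n H, 0 ≤ lossReg n H N hout a f lam V := by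
    intro V
    unfold lossReg
    have := hloss_nonneg V
    positivity
  have hε0 : 0 ≤ ε := le_ciInf hreg_nonneg
  -- key power inequality
  have hCpow : (0 : ℝ) < C ^ ((2 : ℝ) / (H : ℝ)) := Real.rpow_pos_of_pos hC _
  have hkey : ε ^ H * (2 ^ H * C ^ 2) < lam ^ (H + 1) := by
    have hpow := pow_lt_pow_left₀ heps hε0 (n := H) (by omega)
    have e1 : (lam ^ ((1 : ℝ) + 1 / (H : ℝ))) ^ H = lam ^ (H + 1) := by
      rw [← Real.rpow_natCast (lam ^ ((1 : ℝ) + 1 / (H : ℝ))) H,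
        ← Real.rpow_mul hlam.le, ← Real.rpow_natCast lam (H + 1)]
      congr 1
      push_cast
      field_simp
    have e2 : (C ^ ((2 : ℝ) / (H : ℝ))) ^ H = C ^ 2 := by
      rw [← Real.rpow_natCast (C ^ ((2 : ℝ) / (H : ℝ))) H,
        ← Real.rpow_mul hC.le, ← Real.rpow_natCast C 2]
      congr 1
      push_cast
      field_simp
    rw [div_pow, mul_pow, e1, e2] at hpow
    calc ε ^ H * (2 ^ H * C ^ 2)
        < (lam ^ (H + 1) / (2 ^ H * C ^ 2)) * (2 ^ H * C ^ 2) := by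
          apply mul_lt_mul_of_pos_right hpow (by positivity)
      _ = lam ^ (H + 1) := by field_simp
  -- the quantity A
  set A := Real.sqrt ε * Real.sqrt (2 * ε / lam) ^ K with hAdef
  have hA0 : 0 ≤ A := by positivity
  have hs2 : (0 : ℝ) < Real.sqrt 2 := Real.sqrt_pos.mpr two_pos
  have hAlt : A * (Real.sqrt 2 * C) < lam := by
    have hsq : (A * (Real.sqrt 2 * C)) ^ 2 < lam ^ 2 := by
      have e3 : (A * (Real.sqrt 2 * C)) ^ 2 = ε * (2 * ε / lam) ^ K * (2 * C ^ 2) := by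
        rw [hAdef]
        have : (Real.sqrt ε * Real.sqrt (2 * ε / lam) ^ K * (Real.sqrt 2 * C)) ^ 2
            = Real.sqrt ε ^ 2 * (Real.sqrt (2 * ε / lam) ^ 2) ^ K *
              (Real.sqrt 2 ^ 2 * C ^ 2) := by ring
        rw [this, Real.sq_sqrt hε0, Real.sq_sqrt (by positivity),
          Real.sq_sqrt (by norm_num : (0:ℝ) ≤ 2)]
      rw [e3]
      have e4 : ε * (2 * ε / lam) ^ K * (2 * C ^ 2)
          = (ε ^ H * (2 ^ H * C ^ 2)) / lam ^ K := by
        rw [div_pow, mul_pow, hHdef]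
        field_simp
        ring
      rw [e4, div_lt_iff₀ (by positivity)]
      calc ε ^ H * (2 ^ H * C ^ 2) < lam ^ (H + 1) := hkey
        _ = lam ^ 2 * lam ^ K := by rw [hHdef]; ring
    exact lt_of_pow_lt_pow_left₀ 2 hlam.le hsq
  refine ⟨(lam - A * (Real.sqrt 2 * C)) / 2, by linarith, by nlinarith [mul_nonneg hA0 (mul_nonneg hs2.le hC.le)], ?_⟩
  intro W hmin
  have hWle : lossReg n H N hout a f lam W ≤ ε := le_ciInf hmin
  have hlossW : loss n H N hout a f W ≤ ε := by
    have := hWle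
    unfold lossReg at this
    nlinarith [norm_nonneg W]
  have hnormW : ‖W‖ ≤ Real.sqrt (2 * ε / lam) := by
    have h1 : lam / 2 * ‖W‖ ^ 2 ≤ ε := by
      have := hWle
      unfold lossReg at this
      have := hloss_nonneg W
      linarith
    have h2 : ‖W‖ ^ 2 ≤ 2 * ε / lam := by
      rw [le_div_iff₀ hlam]
      nlinarith
    calc ‖W‖ = Real.sqrt (‖W‖ ^ 2) := (Real.sqrt_sq (norm_nonneg W)).symm
      _ ≤ Real.sqrt (2 * ε / lam) := Real.sqrt_le_sqrt h2
  have hstar0 : 0 ≤ starNorm n H W := by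
    apply Real.iSup_nonneg
    intro i
    exact norm_nonneg _
  have hstarle : starNorm n H W ≤ Real.sqrt (2 * ε / lam) :=
    le_trans (ciSup_le fun i => opNorm2_block_le n H W i) hnormW
  have hmain : Real.sqrt (loss n H N hout a f W) * starNorm n H W ^ (H - 1) ≤ A := by
    have hK : H - 1 = K := by omega
    rw [hK, hAdef]
    apply mul_le_mul (Real.sqrt_le_sqrt hlossW)
      (pow_le_pow_left₀ hstar0 hstarle K) (by positivity) (Real.sqrt_nonneg _)
  have hfinal : A < (lam - (lam - A * (Real.sqrt 2 * C)) / 2) / (Real.sqrt 2 * C) := by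
    rw [lt_div_iff₀ (by positivity)]
    nlinarith
  have hden : Real.sqrt 2 * ((H : ℝ) * ((H : ℝ) + 1)) * r = Real.sqrt 2 * C := by
    rw [hCdef]; ring
  show Real.sqrt (loss n H N hout a f W) * starNorm n H W ^ (H - 1) <
    (lam - (lam - A * (Real.sqrt 2 * C)) / 2) / (Real.sqrt 2 * ((H : ℝ) * ((H : ℝ) + 1)) * r)
  rw [hden]
  exact lt_of_le_of_lt hmain hfinal
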